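/- For every r ∈ ℕ, the exponential generating function of the r-derangement numbers satisfies Σ_{n=0}^∞ (D_r(n)/n!)·x^n = x^r·e^{-x}/(1-x)^{r+1} (as an identity of real power series, valid for |x| < 1). -/

import Mathlib

/-- The `r`-derangement number `D_r(n)`: the number of fixed-point-free permutations
of `n + r` elements such that the first `r` (distinguished) elements lie in pairwise
distinct cycles of the cycle decomposition. -/
noncomputable def rDerangement (r n : ℕ) : ℕ :=
  Nat.card {σ : Equiv.Perm (Fin (n + r)) //
    (∀ x, σ x ≠ x) ∧
    ∀ i j : Fin (n + r), (i : ℕ) < r → (j : ℕ) < r → i ≠ j → ¬ σ.SameCycle i j}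

open Equiv Equiv.Perm

namespace RDerAux

variable {α β γ δ : Type*}

/-- Permutations with no fixed points outside `A` whose elements of `R` lie in pairwise
distinct cycles. -/
def Cond (R A : Set α) (σ : Perm α) : Prop :=
  (∀ x, x ∉ A → σ x ≠ x) ∧ ∀ i j : α, i ∈ R → j ∈ R → i ≠ j → ¬ σ.SameCycle i j

noncomputable def pc (α : Type*) (R A : Set α) : ℕ := Nat.card {σ : Perm α // Cond R A σ}

/-- `permCongr` as a `MulEquiv`. -/
def permCongrMul (e : α ≃ β) : Perm α ≃* Perm β :=
  { e.permCongr with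
    map_mul' := fun p q => by
      ext x
      simp [Perm.mul_apply, Equiv.permCongr_apply] }

lemma permCongr_zpow (e : α ≃ β) (σ : Perm α) (k : ℤ) :
    e.permCongr (σ ^ k) = e.permCongr σ ^ k :=
  map_zpow (permCongrMul e) σ k

lemma sameCycle_permCongr (e : α ≃ β) (σ : Perm α) {x y : α} :
    (e.permCongr σ).SameCycle (e x) (e y) ↔ σ.SameCycle x y := by
  constructor
  · rintro ⟨k, hk⟩
    refine ⟨k, e.injective ?_⟩
    rw [← permCongr_zpow] at hk
    simpa using hk
  · rintro ⟨k, hk⟩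
    exact ⟨k, by rw [← permCongr_zpow]; simp [hk]⟩

lemma Cond.permCongr {R A : Set α} {σ : Perm α} (h : Cond R A σ) (e : α ≃ β) :
    Cond (e '' R) (e '' A) (e.permCongr σ) := by
  obtain ⟨h1, h2⟩ := h
  constructor
  · intro y hy hfix
    refine h1 (e.symm y) (fun hm => hy ⟨_, hm, e.apply_symm_apply y⟩) ?_
    have h3 : e (σ (e.symm y)) = y := by simpa [Equiv.permCongr_apply] using hfix
    have h4 : e (σ (e.symm y)) = e (e.symm y) := by rw [h3, e.apply_symm_apply]
    exact e.injective h4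
  · rintro _ _ ⟨i, hi, rfl⟩ ⟨j, hj, rfl⟩ hne hsc
    exact h2 i j hi hj (fun hh => hne (by rw [hh])) ((sameCycle_permCongr e σ).mp hsc)

lemma cond_permCongr_iff (e : α ≃ β) {R A : Set α} {σ : Perm α} :
    Cond (e '' R) (e '' A) (e.permCongr σ) ↔ Cond R A σ := by
  constructor
  · intro h
    have h2 := h.permCongr e.symm
    rw [Equiv.symm_image_image, Equiv.symm_image_image] at h2
    have key : e.symm.permCongr (e.permCongr σ) = σ := by ext x; simp
    rwa [key] at h2
  · exact fun h => h.permCongr e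

def condSubtypeEquiv (e : α ≃ β) (R A : Set α) :
    {σ : Perm α // Cond R A σ} ≃ {σ : Perm β // Cond (e '' R) (e '' A) σ} :=
  e.permCongr.subtypeEquiv fun σ => (cond_permCongr_iff e).symm

lemma pc_congr (e : α ≃ β) (R A : Set α) : pc α R A = pc β (e '' R) (e '' A) :=
  Nat.card_congr (condSubtypeEquiv e R A)

lemma rDer_eq_pc (r n : ℕ) :
    rDerangement r n = pc (Fin (n + r)) {i : Fin (n + r) | (i : ℕ) < r} ∅ := by
  apply Nat.card_congr
  apply Equiv.subtypeEquivRight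
  intro σ
  constructor
  · rintro ⟨h1, h2⟩
    exact ⟨fun x _ => h1 x, fun i j hi hj => h2 i j hi hj⟩
  · rintro ⟨h1, h2⟩
    exact ⟨fun x => h1 x (Set.notMem_empty x), fun i j hi hj => h2 i j hi hj⟩

lemma pc_eq_of_card [Fintype α] [Fintype β] (R : Set α) (S : Set β)
    (hab : Fintype.card α = Fintype.card β) (hRS : Nat.card R = Nat.card S) :
    pc α R ∅ = pc β S ∅ := by
  classical
  have hR' : Fintype.card R = Fintype.card S := by
    simpa [Nat.card_eq_fintype_card] using hRS
  have hcompl : Fintype.card {a : α // ¬ a ∈ R} = Fintype.card {b : β // ¬ b ∈ S} := by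
    rw [Fintype.card_subtype_compl, Fintype.card_subtype_compl, hab, hR']
  let eR : {a : α // a ∈ R} ≃ {b : β // b ∈ S} := Fintype.equivOfCardEq hR'
  let eC : {a : α // ¬ a ∈ R} ≃ {b : β // ¬ b ∈ S} := Fintype.equivOfCardEq hcompl
  let e : α ≃ β :=
    (Equiv.sumCompl (· ∈ R)).symm.trans ((eR.sumCongr eC).trans (Equiv.sumCompl (· ∈ S)))
  have himg : e '' R = S := by
    ext y
    constructor
    · rintro ⟨x, hx, rfl⟩
      have h1 : (Equiv.sumCompl (· ∈ R)).symm x = Sum.inl ⟨x, hx⟩ :=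
        Equiv.sumCompl_symm_apply_of_pos hx
      show e x ∈ S
      simp only [e, Equiv.trans_apply, h1, Equiv.sumCongr_apply, Sum.map_inl,
        Equiv.sumCompl_apply_inl]
      exact (eR ⟨x, hx⟩).2
    · intro hy
      refine ⟨e.symm y, ?_, e.apply_symm_apply y⟩
      have h1 : (Equiv.sumCompl (· ∈ S)).symm y = Sum.inl ⟨y, hy⟩ :=
        Equiv.sumCompl_symm_apply_of_pos hy
      show e.symm y ∈ R
      simp only [e, Equiv.symm_trans_apply, Equiv.symm_symm, h1, Equiv.sumCongr_symm,
        Equiv.sumCongr_apply, Sum.map_inl, Equiv.sumCompl_apply_inl]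
      exact (eR.symm ⟨y, hy⟩).2
  rw [pc_congr e R ∅, himg, Set.image_empty]

lemma pc_eq_rDer [Fintype α] (R : Set α) (r n : ℕ)
    (h1 : Fintype.card α = n + r) (h2 : Nat.card R = r) :
    pc α R ∅ = rDerangement r n := by
  rw [rDer_eq_pc]
  apply pc_eq_of_card R _ (by simp [h1])
  rw [h2]
  have e0 : {i : Fin (n + r) | (i : ℕ) < r} ≃ Fin r :=
    { toFun := fun i => ⟨i.1, i.2⟩
      invFun := fun j => ⟨⟨j.1, lt_of_lt_of_le j.2 (Nat.le_add_left r n)⟩, j.2⟩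
      left_inv := fun i => rfl
      right_inv := fun j => rfl }
  rw [Nat.card_congr e0, Nat.card_eq_fintype_card, Fintype.card_fin]

section OptionLemmas

instance {γ : Type*} [Finite γ] : Finite (Option γ) :=
  Finite.of_equiv (γ ⊕ (PUnit : Type)) (Equiv.optionEquivSumPUnit γ).symm

lemma sameCycle_of_removeNone_pow (σ : Perm (Option γ)) :
    ∀ (n : ℕ) (i j : γ), (σ ^ n) (some i) = some j → Perm.SameCycle (removeNone σ) i j := by
  intro n
  induction n using Nat.strong_induction_on with
  | _ n IH =>
    intro i j h
    rcases n with _ | m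
    · rw [pow_zero] at h
      cases Option.some_injective γ (by simpa using h)
      exact SameCycle.refl _ _
    · rw [pow_succ, Perm.mul_apply] at h
      cases hsi : σ (some i) with
      | some a =>
        rw [hsi] at h
        have hτ : removeNone σ i = a :=
          Option.some_injective _ (by rw [removeNone_some σ ⟨a, hsi⟩, hsi])
        exact SameCycle.trans ⟨1, by simpa using hτ⟩ (IH m (Nat.lt_succ_self m) a j h)
      | none =>
        rw [hsi] at h
        cases hs0 : σ none with
        | none => exact absurd (σ.injective (hsi.trans hs0.symm)) (by simp)
        | some b =>
          have hτ : removeNone σ i = b :=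
            Option.some_injective _ (by rw [removeNone_none σ hsi, hs0])
          rcases m with _ | k
          · rw [pow_zero] at h
            simp at h
          · rw [pow_succ, Perm.mul_apply, hs0] at h
            exact SameCycle.trans ⟨1, by simpa using hτ⟩ (IH k (by omega) b j h)

lemma sameCycle_some_removeNone (σ : Perm (Option γ)) (i : γ) :
    σ.SameCycle (some i) (some (removeNone σ i)) := by
  cases hsi : σ (some i) with
  | some a =>
    have hτ : removeNone σ i = a :=
      Option.some_injective _ (by rw [removeNone_some σ ⟨a, hsi⟩, hsi])
    exact ⟨1, by simpa [hτ] using hsi⟩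
  | none =>
    have hτ : some (removeNone σ i) = σ none := removeNone_none σ hsi
    refine ⟨2, ?_⟩
    rw [show (2 : ℤ) = 1 + 1 by norm_num, zpow_add, zpow_one, Perm.mul_apply, hsi, ← hτ]

lemma sameCycle_removeNone [Finite γ] (σ : Perm (Option γ)) (i j : γ) :
    Perm.SameCycle (removeNone σ) i j ↔ σ.SameCycle (some i) (some j) := by
  constructor
  · intro h
    obtain ⟨n, -, hn⟩ := h.exists_pow_eq'
    clear h
    induction n generalizing i with
    | zero =>
      cases (by simpa using hn : i = j)
      exact SameCycle.refl _ _
    | succ m IHm =>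
      rw [pow_succ, Perm.mul_apply] at hn
      exact SameCycle.trans (sameCycle_some_removeNone σ i) (IHm (removeNone σ i) hn)
  · intro h
    obtain ⟨n, -, hn⟩ := h.exists_pow_eq'
    exact sameCycle_of_removeNone_pow σ n i j hn

lemma cond_option_iff [Finite γ] (σ : Perm (Option γ)) (R' : Set γ) (a : γ)
    (ha : σ none = some a) :
    Cond (insert none (some '' R')) ∅ σ ↔
      (a ∉ R' ∧ Cond (insert a R') {a} (removeNone σ)) := by
  have hna : σ.SameCycle none (some a) := ⟨1, by simpa using ha⟩
  constructor
  · rintro ⟨h1, h2⟩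
    refine ⟨?_, ?_, ?_⟩
    · intro haR
      exact h2 none (some a) (Set.mem_insert _ _)
        (Set.mem_insert_of_mem _ ⟨a, haR, rfl⟩) (by simp) hna
    · intro x hx hfix
      cases hsx : σ (some x) with
      | some b =>
        have hs : some (removeNone σ x) = σ (some x) := removeNone_some σ ⟨b, hsx⟩
        rw [hfix] at hs
        exact h1 (some x) (Set.notMem_empty _) hs.symm
      | none =>
        have hs : some (removeNone σ x) = σ none := removeNone_none σ hsx
        rw [ha, hfix] at hs
        exact hx (by simpa using hs)
    · intro i j hi hj hij hsc
      have hsc' := (sameCycle_removeNone σ i j).mp hsc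
      rcases Set.mem_insert_iff.mp hi with rfl | hiR
      · rcases Set.mem_insert_iff.mp hj with rfl | hjR
        · exact hij rfl
        · exact h2 none (some j) (Set.mem_insert _ _)
            (Set.mem_insert_of_mem _ ⟨j, hjR, rfl⟩) (by simp) (hna.trans hsc')
      · rcases Set.mem_insert_iff.mp hj with rfl | hjR
        · exact h2 none (some i) (Set.mem_insert _ _)
            (Set.mem_insert_of_mem _ ⟨i, hiR, rfl⟩) (by simp) (hna.trans hsc'.symm)
        · exact h2 (some i) (some j) (Set.mem_insert_of_mem _ ⟨i, hiR, rfl⟩)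
            (Set.mem_insert_of_mem _ ⟨j, hjR, rfl⟩)
            (fun hh => hij (Option.some_injective _ hh)) hsc'
  · rintro ⟨haR, h1, h2⟩
    constructor
    · intro x _ hfix
      cases x with
      | none =>
        rw [ha] at hfix
        simp at hfix
      | some x =>
        have hs : some (removeNone σ x) = σ (some x) := removeNone_some σ ⟨x, hfix⟩
        rw [hfix] at hs
        have hτx : removeNone σ x = x := Option.some_injective _ hs
        by_cases hxa : x = a
        · subst hxa
          exact (by simpa using σ.injective (ha.trans hfix.symm))
        · exact h1 x (by simpa using hxa) hτx
    · intro i j hi hj hij hsc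
      rcases Set.mem_insert_iff.mp hi with rfl | ⟨i', hi', rfl⟩
      · rcases Set.mem_insert_iff.mp hj with rfl | ⟨j', hj', rfl⟩
        · exact hij rfl
        · have hsc' := (sameCycle_removeNone σ a j').mpr (hna.symm.trans hsc)
          exact h2 a j' (Set.mem_insert _ _) (Set.mem_insert_of_mem _ hj')
            (fun hh => haR (hh ▸ hj')) hsc'
      · rcases Set.mem_insert_iff.mp hj with rfl | ⟨j', hj', rfl⟩
        · have hsc' := (sameCycle_removeNone σ a i').mpr (hna.symm.trans hsc.symm)
          exact h2 a i' (Set.mem_insert _ _) (Set.mem_insert_of_mem _ hi')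
            (fun hh => haR (hh ▸ hi')) hsc'
        · exact h2 i' j' (Set.mem_insert_of_mem _ hi') (Set.mem_insert_of_mem _ hj')
            (fun hh => hij (congrArg some hh)) ((sameCycle_removeNone σ i' j').mpr hsc)

end OptionLemmas

section Counting

/-- splitting off the `some`-constraint on the first coordinate -/
noncomputable def someFstEquiv (Q : γ → β → Prop) :
    {q : γ × β // Q q.1 q.2} ≃ {p : Option γ × β // ∃ a, p.1 = some a ∧ Q a p.2} :=
  Equiv.ofBijective (fun q => ⟨(some q.1.1, q.1.2), ⟨q.1.1, rfl, q.2⟩⟩) (by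
    constructor
    · rintro ⟨⟨a, b⟩, hq⟩ ⟨⟨a', b'⟩, hq'⟩ h
      simp only [Subtype.mk.injEq, Prod.mk.injEq, Option.some.injEq] at h
      obtain ⟨h1, h2⟩ := h
      subst h1
      subst h2
      rfl
    · rintro ⟨⟨o, b⟩, a, h1, h2⟩
      change o = some a at h1
      subst h1
      exact ⟨⟨(a, b), h2⟩, rfl⟩)

/-- canonicalizing the allowed fixed point by conjugation with a swap -/
def condCanon [DecidableEq γ] (R' : Set γ) (a₀ : γ) (ha₀ : a₀ ∉ R') (a : γ) (ha : a ∉ R') :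
    {τ : Perm γ // Cond (insert a R') {a} τ} ≃ {τ : Perm γ // Cond (insert a₀ R') {a₀} τ} :=
  (condSubtypeEquiv (Equiv.swap a a₀) _ _).trans (Equiv.subtypeEquivRight (fun τ => by
    have h1 : Equiv.swap a a₀ '' R' = R' := by
      have hfix : ∀ x ∈ R', Equiv.swap a a₀ x = x := fun x hx =>
        Equiv.swap_apply_of_ne_of_ne (ne_of_mem_of_not_mem hx ha) (ne_of_mem_of_not_mem hx ha₀)
      rw [Set.image_congr hfix, Set.image_id']
    rw [Set.image_insert_eq, Equiv.swap_apply_left, h1, Set.image_singleton,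
      Equiv.swap_apply_left]))

def sigmaProdEquiv [DecidableEq γ] (R' : Set γ) (a₀ : γ) (ha₀ : a₀ ∉ R') :
    {q : γ × Perm γ // q.1 ∉ R' ∧ Cond (insert q.1 R') {q.1} q.2} ≃
      {a : γ // a ∉ R'} × {τ : Perm γ // Cond (insert a₀ R') {a₀} τ} where
  toFun q := (⟨q.1.1, q.2.1⟩, condCanon R' a₀ ha₀ q.1.1 q.2.1 ⟨q.1.2, q.2.2⟩)
  invFun s := ⟨(s.1.1, ((condCanon R' a₀ ha₀ s.1.1 s.1.2).symm s.2).1),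
      s.1.2, ((condCanon R' a₀ ha₀ s.1.1 s.1.2).symm s.2).2⟩
  left_inv q := by
    obtain ⟨⟨a, τ⟩, ha, hτ⟩ := q
    apply Subtype.ext
    simp
  right_inv s := by
    obtain ⟨⟨a, ha⟩, τ⟩ := s
    simp

lemma count_option [Finite γ] (R' : Set γ) (a₀ : γ) (ha₀ : a₀ ∉ R') :
    pc (Option γ) (insert none (some '' R')) ∅ =
      Nat.card {a : γ // a ∉ R'} * Nat.card {τ : Perm γ // Cond (insert a₀ R') {a₀} τ} := by
  classical
  have key : ∀ σ : Perm (Option γ), Cond (insert none (some '' R')) ∅ σ ↔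
      (∃ a : γ, σ none = some a ∧ a ∉ R' ∧ Cond (insert a R') {a} (removeNone σ)) := by
    intro σ
    constructor
    · intro h
      cases h0 : σ none with
      | none => exact absurd h0 (h.1 none (Set.notMem_empty _))
      | some a =>
        obtain ⟨ha1, ha2⟩ := (cond_option_iff σ R' a h0).mp h
        exact ⟨a, rfl, ha1, ha2⟩
    · rintro ⟨a, h0, h⟩
      exact (cond_option_iff σ R' a h0).mpr h
  calc pc (Option γ) (insert none (some '' R')) ∅
      = Nat.card {p : Option γ × Perm γ //
          ∃ a, p.1 = some a ∧ a ∉ R' ∧ Cond (insert a R') {a} p.2} := by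
        apply Nat.card_congr
        refine Equiv.Perm.decomposeOption.subtypeEquiv fun σ => ?_
        simp only [Equiv.Perm.decomposeOption_apply]
        exact key σ
    _ = Nat.card {q : γ × Perm γ // q.1 ∉ R' ∧ Cond (insert q.1 R') {q.1} q.2} :=
        (Nat.card_congr (someFstEquiv
          (fun a (τ : Perm γ) => a ∉ R' ∧ Cond (insert a R') {a} τ)).symm)
    _ = Nat.card ({a : γ // a ∉ R'} × {τ : Perm γ // Cond (insert a₀ R') {a₀} τ}) :=
        Nat.card_congr (sigmaProdEquiv R' a₀ ha₀)
    _ = _ := Nat.card_prod _ _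

lemma count_split [Finite γ] (R' : Set γ) (a₀ : γ) :
    Nat.card {τ : Perm γ // Cond (insert a₀ R') {a₀} τ} =
      Nat.card {τ : Perm γ // Cond (insert a₀ R') {a₀} τ ∧ τ a₀ = a₀} +
        pc γ (insert a₀ R') ∅ := by
  classical
  have e := Equiv.sumCompl
    (fun τ : {τ : Perm γ // Cond (insert a₀ R') {a₀} τ} => τ.1 a₀ = a₀)
  rw [← Nat.card_congr e, Nat.card_sum]
  congr 1
  · exact Nat.card_congr (Equiv.subtypeSubtypeEquivSubtypeInter
      (fun τ : Perm γ => Cond (insert a₀ R') {a₀} τ) (fun τ => τ a₀ = a₀))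
  · apply Nat.card_congr
    refine (Equiv.subtypeSubtypeEquivSubtypeInter
      (fun τ : Perm γ => Cond (insert a₀ R') {a₀} τ) (fun τ => ¬ τ a₀ = a₀)).trans
      (Equiv.subtypeEquivRight fun τ => ?_)
    constructor
    · rintro ⟨⟨h1, h2⟩, h3⟩
      refine ⟨fun x _ => ?_, h2⟩
      by_cases hx : x = a₀
      · subst hx; exact h3
      · exact h1 x (by simpa using hx)
    · rintro ⟨h1, h2⟩
      exact ⟨⟨fun x _ => h1 x (Set.notMem_empty _), h2⟩, h1 a₀ (Set.notMem_empty _)⟩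

/-- permutations of `Option δ` fixing `none` are permutations of `δ` -/
def fixNoneEquiv {δ : Type*} : {τ : Perm (Option δ) // τ none = none} ≃ Perm δ where
  toFun τ := removeNone τ.1
  invFun ρ := ⟨Equiv.optionCongr ρ, by simp⟩
  left_inv τ := by
    apply Subtype.ext
    apply Equiv.ext
    intro x
    cases x with
    | none => simp [τ.2]
    | some y =>
      cases h' : τ.1 (some y) with
      | none => exact absurd (τ.1.injective (h'.trans τ.2.symm)) (by simp)
      | some b =>
        simp only [Equiv.optionCongr_apply, Option.map_some]
        exact (removeNone_some τ.1 ⟨b, h'⟩).trans h'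
  right_inv ρ := removeNone_optionCongr ρ

lemma count_fixed [Finite δ] (R₀ : Set δ) :
    Nat.card {τ : Perm (Option δ) //
        Cond (insert none (some '' R₀)) {none} τ ∧ τ none = none} =
      pc δ R₀ ∅ := by
  classical
  apply Nat.card_congr
  refine (Equiv.subtypeEquivRight fun τ => and_comm).trans ?_
  refine ((Equiv.subtypeSubtypeEquivSubtypeInter
    (fun τ : Perm (Option δ) => τ none = none)
    (fun τ => Cond (insert none (some '' R₀)) {none} τ)).symm.trans ?_)
  refine fixNoneEquiv.subtypeEquiv fun τ => ?_
  obtain ⟨τ, hfix⟩ := τ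
  have hsome : ∀ y : δ, τ (some y) = some (removeNone τ y) := by
    intro y
    cases h' : τ (some y) with
    | none => exact absurd (τ.injective (h'.trans hfix.symm)) (by simp)
    | some b => exact ((removeNone_some τ ⟨b, h'⟩).trans h').symm
  show Cond (insert none (some '' R₀)) {none} τ ↔ Cond R₀ ∅ (removeNone τ)
  constructor
  · rintro ⟨h1, h2⟩
    constructor
    · intro y _ hy
      exact h1 (some y) (by simp) (by rw [hsome y, hy])
    · intro i j hi hj hij hsc
      exact h2 (some i) (some j) (Set.mem_insert_of_mem _ ⟨i, hi, rfl⟩)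
        (Set.mem_insert_of_mem _ ⟨j, hj, rfl⟩)
        (fun hh => hij (Option.some_injective _ hh))
        ((sameCycle_removeNone τ i j).mp hsc)
  · rintro ⟨h1, h2⟩
    constructor
    · intro x hx hfx
      cases x with
      | none => exact hx rfl
      | some y =>
        rw [hsome y] at hfx
        exact h1 y (Set.notMem_empty _) (Option.some_injective _ hfx)
    · intro i j hi hj hij hsc
      rcases Set.mem_insert_iff.mp hi with rfl | ⟨i', hi', rfl⟩
      · exact hij (hsc.eq_of_left hfix)
      · rcases Set.mem_insert_iff.mp hj with rfl | ⟨j', hj', rfl⟩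
        · exact hij (hsc.symm.eq_of_left hfix).symm
        · exact h2 i' j' hi' hj' (fun hh => hij (congrArg some hh))
            ((sameCycle_removeNone τ i' j').mpr hsc)

end Counting

section Recurrence

lemma rDer_zero_left (n : ℕ) : rDerangement 0 n = numDerangements n := by
  have h : rDerangement 0 n = Nat.card ↥(derangements (Fin (n + 0))) :=
    Nat.card_congr (Equiv.subtypeEquivRight fun σ =>
      ⟨fun h => h.1, fun h => ⟨h, fun i j hi => absurd hi (Nat.not_lt_zero _)⟩⟩)
  rw [h, Nat.card_eq_fintype_card]
  exact card_derangements_fin_eq_numDerangements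

lemma rDer_succ_zero (r : ℕ) : rDerangement (r + 1) 0 = 0 := by
  have hempty : IsEmpty {σ : Perm (Fin (0 + (r + 1))) //
      (∀ x, σ x ≠ x) ∧
      ∀ i j : Fin (0 + (r + 1)), (i : ℕ) < r + 1 → (j : ℕ) < r + 1 → i ≠ j →
        ¬ σ.SameCycle i j} := by
    constructor
    rintro ⟨σ, h1, h2⟩
    have x : Fin (0 + (r + 1)) := ⟨0, by omega⟩
    exact h2 x (σ x) (by simpa using x.isLt) (by simpa using (σ x).isLt)
      (fun hh => h1 x hh.symm) ⟨1, by simp⟩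
  exact @Nat.card_of_isEmpty _ hempty

lemma rDer_rec (r n : ℕ) :
    rDerangement (r + 1) (n + 1) = (n + 1) * (rDerangement (r + 1) n + rDerangement r n) := by
  classical
  set δ := (Fin r ⊕ Fin n) with hδ
  set R₀ : Set δ := Set.range Sum.inl with hR₀def
  have hR₀ : Nat.card R₀ = r := by
    calc Nat.card R₀ = Nat.card (Fin r) :=
          Nat.card_congr (Equiv.ofInjective _ Sum.inl_injective).symm
    _ = r := by simp [Nat.card_eq_fintype_card]
  have hcardδ : Fintype.card δ = r + n := by simp [hδ]
  have hnone1 : (none : Option δ) ∉ some '' R₀ := by simp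
  have hnone2 : (none : Option (Option δ)) ∉ some '' (some '' R₀) := by simp
  -- cards of the special sets
  have hc1 : Nat.card ↥(insert none (some '' R₀) : Set (Option δ)) = r + 1 := by
    rw [Nat.card_coe_set_eq, Set.ncard_insert_of_notMem hnone1,
      Set.ncard_image_of_injective _ (Option.some_injective δ)]
    rw [← Nat.card_coe_set_eq, hR₀]
  have hc2 : Nat.card ↥(insert none (some '' (some '' R₀)) : Set (Option (Option δ))) = r + 1 := by
    rw [Nat.card_coe_set_eq, Set.ncard_insert_of_notMem hnone2,
      Set.ncard_image_of_injective _ (Option.some_injective (Option δ)),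
      Set.ncard_image_of_injective _ (Option.some_injective δ)]
    rw [← Nat.card_coe_set_eq, hR₀]
  -- identify the LHS
  have hLHS : rDerangement (r + 1) (n + 1) =
      pc (Option (Option δ)) (insert none (some '' (some '' R₀))) ∅ := by
    refine (pc_eq_rDer _ (r + 1) (n + 1) ?_ ?_).symm
    · simp [hcardδ]; omega
    · rw [hc2]
  -- the number of nonspecial points
  have hcount : Nat.card {a : Option δ // a ∉ some '' R₀} = n + 1 := by
    have h1 : {a : Option δ // a ∉ some '' R₀} ≃ ↥((some '' R₀)ᶜ) :=
      Equiv.subtypeEquivRight fun a => Iff.rfl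
    rw [Nat.card_congr h1, Nat.card_coe_set_eq]
    have h2 := Set.ncard_add_ncard_compl (some '' R₀ : Set (Option δ))
    have h3 : (some '' R₀ : Set (Option δ)).ncard = r := by
      rw [Set.ncard_image_of_injective _ (Option.some_injective δ),
        ← Nat.card_coe_set_eq, hR₀]
    have h4 : Nat.card (Option δ) = r + n + 1 := by
      rw [Nat.card_eq_fintype_card]
      simp [hcardδ]
    omega
  -- the two inner counts
  have hA : pc (Option δ) (insert none (some '' R₀)) ∅ = rDerangement (r + 1) n := by
    refine pc_eq_rDer _ (r + 1) n ?_ ?_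
    · simp [hcardδ]; omega
    · rw [hc1]
  have hB : pc δ R₀ ∅ = rDerangement r n := by
    refine pc_eq_rDer _ r n ?_ ?_
    · simp [hcardδ]; omega
    · exact hR₀
  rw [hLHS, count_option (some '' R₀) none hnone1, hcount,
    count_split (some '' R₀) (none : Option δ), count_fixed R₀, hA, hB]
  ring

end Recurrence

section Analytic

lemma rDer_le (r n : ℕ) : rDerangement r n ≤ (n + r).factorial := by
  calc rDerangement r n ≤ Nat.card (Perm (Fin (n + r))) :=
        Nat.card_le_card_of_injective Subtype.val Subtype.val_injective
  _ = (n + r).factorial := by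
      rw [Nat.card_eq_fintype_card, Fintype.card_perm, Fintype.card_fin]

lemma fact_le_pow (n r : ℕ) : (n + r).factorial ≤ n.factorial * (n + r) ^ r := by
  induction r with
  | zero => simp
  | succ r IH =>
    rw [show n + (r + 1) = (n + r) + 1 from rfl, Nat.factorial_succ]
    calc (n + r + 1) * (n + r).factorial ≤ (n + r + 1) * (n.factorial * (n + r) ^ r) :=
          Nat.mul_le_mul_left _ IH
    _ ≤ (n + r + 1) * (n.factorial * (n + r + 1) ^ r) := by
        apply Nat.mul_le_mul_left
        apply Nat.mul_le_mul_left
        exact Nat.pow_le_pow_left (by omega) r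
    _ = n.factorial * (n + r + 1) ^ (r + 1) := by ring

lemma summable_aux (r : ℕ) {x : ℝ} (hx : |x| < 1) :
    Summable (fun n : ℕ => (rDerangement r n : ℝ) / n.factorial * x ^ n) := by
  rcases eq_or_ne x 0 with rfl | hx0
  · apply summable_of_ne_finset_zero (s := {0})
    intro n hn
    rw [zero_pow (by simpa using hn), mul_zero]
  · apply Summable.of_norm
    have hsum : Summable (fun n : ℕ => ((n : ℝ) + r) ^ r * |x| ^ n) := by
      have h1 : Summable (fun m : ℕ => (m : ℝ) ^ r * |x| ^ m) :=
        summable_pow_mul_geometric_of_norm_lt_one r (by rwa [Real.norm_eq_abs, abs_abs])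
      have h2 : Summable (fun n : ℕ => ((n + r : ℕ) : ℝ) ^ r * |x| ^ (n + r)) :=
        h1.comp_injective (add_left_injective r)
      have h3 := h2.mul_left ((|x| ^ r)⁻¹)
      refine h3.congr fun n => ?_
      have hxr : |x| ^ r ≠ 0 := pow_ne_zero r (by simpa using hx0)
      push_cast
      rw [pow_add]
      field_simp
    refine Summable.of_nonneg_of_le (fun n => norm_nonneg _) (fun n => ?_) hsum
    rw [Real.norm_eq_abs, abs_mul, abs_div, abs_pow]
    have hb : (rDerangement r n : ℝ) ≤ (n.factorial : ℝ) * ((n : ℝ) + r) ^ r := by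
      have h0 := (rDer_le r n).trans (fact_le_pow n r)
      calc (rDerangement r n : ℝ) ≤ ((n.factorial * (n + r) ^ r : ℕ) : ℝ) := by
            exact_mod_cast h0
      _ = (n.factorial : ℝ) * ((n : ℝ) + r) ^ r := by push_cast; ring
    have habs1 : |(rDerangement r n : ℝ)| = (rDerangement r n : ℝ) :=
      abs_of_nonneg (by positivity)
    have habs2 : |(n.factorial : ℝ)| = (n.factorial : ℝ) :=
      abs_of_nonneg (by positivity)
    rw [habs1, habs2]
    apply mul_le_mul_of_nonneg_right _ (pow_nonneg (abs_nonneg x) n)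
    rw [div_le_iff₀ (by positivity)]
    calc (rDerangement r n : ℝ) ≤ (n.factorial : ℝ) * ((n : ℝ) + r) ^ r := hb
    _ = ((n : ℝ) + r) ^ r * n.factorial := by ring

lemma base_egf {x : ℝ} (hx : |x| < 1) :
    HasSum (fun n : ℕ => ((numDerangements n : ℝ)) / n.factorial * x ^ n)
      (Real.exp (-x) / (1 - x)) := by
  have habsx : ‖x‖ < 1 := by rwa [Real.norm_eq_abs]
  have hf : Summable (fun k : ℕ => ‖(-x) ^ k / (k.factorial : ℝ)‖) := by
    refine (NormedSpace.expSeries_div_summable |x|).congr fun k => ?_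
    rw [norm_div, norm_pow, norm_neg, Real.norm_eq_abs, Real.norm_eq_abs, Nat.abs_cast]
  have hg : Summable (fun m : ℕ => ‖x ^ m‖) := by
    refine (summable_geometric_of_lt_one (abs_nonneg x) hx).congr fun m => ?_
    rw [norm_pow, Real.norm_eq_abs]
  have hsum := summable_sum_mul_range_of_summable_norm' hf hf.of_norm hg hg.of_norm
  have htsum := tsum_mul_tsum_eq_tsum_sum_range_of_summable_norm' hf hf.of_norm hg hg.of_norm
  have hexp : ∑' k : ℕ, (-x) ^ k / (k.factorial : ℝ) = Real.exp (-x) := by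
    rw [Real.exp_eq_exp_ℝ]
    exact (NormedSpace.expSeries_div_hasSum_exp (-x)).tsum_eq
  have hgeo : ∑' m : ℕ, x ^ m = (1 - x)⁻¹ := tsum_geometric_of_norm_lt_one habsx
  have hcoef : ∀ n : ℕ, ∑ k ∈ Finset.range (n + 1), (-x) ^ k / (k.factorial : ℝ) * x ^ (n - k)
      = (numDerangements n : ℝ) / n.factorial * x ^ n := by
    intro n
    have hD : ((numDerangements n : ℝ)) =
        ∑ k ∈ Finset.range (n + 1), (-1 : ℝ) ^ k * ((k + 1).ascFactorial (n - k) : ℝ) := by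
      have := numDerangements_sum n
      have h2 := congrArg (fun z : ℤ => (z : ℝ)) this
      push_cast at h2
      convert h2 using 1
    rw [hD, Finset.sum_div, Finset.sum_mul]
    apply Finset.sum_congr rfl
    intro k hk
    have hkn : k ≤ n := Nat.lt_succ_iff.mp (Finset.mem_range.mp hk)
    have hfact : (k.factorial : ℝ) * (((k + 1).ascFactorial (n - k) : ℕ) : ℝ)
        = (n.factorial : ℝ) := by
      rw [← Nat.cast_mul, Nat.factorial_mul_ascFactorial, Nat.add_sub_cancel' hkn]
    have hxk : x ^ n = x ^ k * x ^ (n - k) := by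
      rw [← pow_add, Nat.add_sub_cancel' hkn]
    have hknz : (k.factorial : ℝ) ≠ 0 := by positivity
    have hanz : (((k + 1).ascFactorial (n - k) : ℕ) : ℝ) ≠ 0 := by
      have := Nat.ascFactorial_pos k (n - k)
      positivity
    rw [hxk, ← hfact, neg_pow]
    field_simp
  have hS : Summable (fun n : ℕ => (numDerangements n : ℝ) / n.factorial * x ^ n) :=
    hsum.congr hcoef
  have h1 : ∑' n : ℕ, ((numDerangements n : ℝ) / n.factorial * x ^ n)
      = Real.exp (-x) * (1 - x)⁻¹ := by
    rw [tsum_congr (fun n => (hcoef n).symm), ← htsum, hexp, hgeo]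
  have h2 := hS.hasSum
  rw [h1] at h2
  simpa [div_eq_mul_inv] using h2

end Analytic

end RDerAux

theorem rDerangement_egf (r : ℕ) (x : ℝ) (hx : |x| < 1) :
    HasSum (fun n : ℕ => (rDerangement r n : ℝ) / n.factorial * x ^ n)
      (x ^ r * Real.exp (-x) / (1 - x) ^ (r + 1)) := by
  have hx1 : x < 1 := (abs_lt.mp hx).2
  have h1x : (1 : ℝ) - x ≠ 0 := sub_ne_zero.mpr (ne_of_gt (by linarith))
  induction r with
  | zero =>
    have h := RDerAux.base_egf hx
    simp only [pow_zero, one_mul, zero_add, pow_one, RDerAux.rDer_zero_left]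
    exact h
  | succ r IH =>
    have hs := RDerAux.summable_aux (r + 1) hx
    set T : ℝ := x ^ r * Real.exp (-x) / (1 - x) ^ (r + 1) with hT
    have hrec : ∀ n : ℕ, (rDerangement (r + 1) (n + 1) : ℝ) / (n + 1).factorial * x ^ (n + 1)
        = x * ((rDerangement (r + 1) n : ℝ) / n.factorial * x ^ n
            + (rDerangement r n : ℝ) / n.factorial * x ^ n) := by
      intro n
      rw [RDerAux.rDer_rec r n, Nat.factorial_succ]
      have hfnz : ((n.factorial : ℝ)) ≠ 0 := by positivity
      push_cast
      field_simp
      ring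
    set S : ℝ := ∑' n : ℕ, (rDerangement (r + 1) n : ℝ) / n.factorial * x ^ n with hSdef
    have hS0 : S = x * (S + T) := by
      rw [hSdef]
      conv_lhs => rw [Summable.tsum_eq_zero_add hs]
      rw [RDerAux.rDer_succ_zero]
      simp only [Nat.cast_zero, zero_div, pow_zero, mul_one, zero_add]
      rw [tsum_congr hrec, tsum_mul_left, Summable.tsum_add hs IH.summable, IH.tsum_eq]
    have hSval : S = x * T / (1 - x) := by
      rw [eq_div_iff h1x]
      linear_combination hS0
    have hfinal : x * T / (1 - x) = x ^ (r + 1) * Real.exp (-x) / (1 - x) ^ (r + 1 + 1) := by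
      rw [hT]
      field_simp
      ring
    have h2 := hs.hasSum
    rw [← hSdef, hSval, hfinal] at h2
    exact h2
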